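/- arXiv:2502.14582 — 3 statements merged into one kernel-verified Lean document; each statement's English description precedes it below -/
import Mathlib

section
/- Let n be even and let A be a transitive abelian permutation group of order n with A ≤ Alt(n), and suppose A is not an elementary abelian 2-group. Let G = D(A) act on the n left cosets of H = ⟨x⟩. Then α(Γ_G) = 2 and there exists an inverse-closed subset D ⊆ Der(G) such that α(Cay(G, Der(G) \ D)) = 3. -/
/-- The Cayley graph of a group `Γ` with (inverse-closed) connection set `C`:
`g` and `h` are adjacent iff they are distinct and `g⁻¹ * h ∈ C` (symmetrized). -/
def cayley (Γ : Type*) [Group Γ] (C : Set Γ) : SimpleGraph Γ where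
  Adj g h := g ≠ h ∧ g⁻¹ * h ∈ C ∧ h⁻¹ * g ∈ C
  symm := ⟨fun _ _ ⟨hne, h1, h2⟩ => ⟨hne.symm, h2, h1⟩⟩
  loopless := ⟨fun _ ⟨hne, _⟩ => hne rfl⟩

/-- A set of vertices of a graph is independent if its elements are pairwise non-adjacent. -/
def IsIndepSet {V : Type*} (X : SimpleGraph V) (s : Set V) : Prop :=
  s.Pairwise fun a b => ¬ X.Adj a b

/-- The independence number of a graph: the maximum size of an independent set. -/
noncomputable def indepNum {V : Type*} (X : SimpleGraph V) : ℕ :=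
  sSup {k | ∃ s : Finset V, IsIndepSet X ↑s ∧ s.card = k}

/-- The set of derangements of a permutation group `G ≤ Sym(n)`: the elements of `G`
fixing no point of `{1,…,n}`. -/
def der {n : ℕ} (G : Subgroup (Equiv.Perm (Fin n))) : Set G :=
  {σ : G | ∀ i : Fin n, (σ : Equiv.Perm (Fin n)) i ≠ i}
/-- The set of derangements of the action of `G` on the left cosets of `H`:
the elements of `G` fixing no coset. -/
def derQ (G : Type*) [Group G] (H : Subgroup G) : Set G :=
  {g : G | ∀ c : G ⧸ H, g • c ≠ c}

lemma indepNum_eq_of {V : Type*} (X : SimpleGraph V) (k : ℕ)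
    (h1 : ∃ s : Finset V, IsIndepSet X ↑s ∧ s.card = k)
    (h2 : ∀ s : Finset V, IsIndepSet X ↑s → s.card ≤ k) : indepNum X = k := by
  have hbdd : BddAbove {k | ∃ s : Finset V, IsIndepSet X ↑s ∧ s.card = k} :=
    ⟨k, by rintro n ⟨s, hs, rfl⟩; exact h2 s hs⟩
  apply le_antisymm
  · exact csSup_le ⟨k, h1⟩ (by rintro n ⟨s, hs, rfl⟩; exact h2 s hs)
  · exact le_csSup hbdd h1

lemma exists_three_of_card {V : Type*} {s : Finset V} (h : 3 ≤ s.card) :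
    ∃ a ∈ s, ∃ b ∈ s, ∃ c ∈ s, a ≠ b ∧ a ≠ c ∧ b ≠ c := by
  classical
  obtain ⟨a, ha⟩ := Finset.card_pos.mp (show 0 < s.card by omega)
  have h2 : 2 ≤ (s.erase a).card := by
    have := Finset.card_erase_of_mem ha; omega
  obtain ⟨b, hb⟩ := Finset.card_pos.mp (show 0 < (s.erase a).card by omega)
  have h1 : 1 ≤ ((s.erase a).erase b).card := by
    have := Finset.card_erase_of_mem hb; omega
  obtain ⟨c, hc⟩ := Finset.card_pos.mp (show 0 < ((s.erase a).erase b).card by omega)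
  rw [Finset.mem_erase, Finset.mem_erase] at hc
  rw [Finset.mem_erase] at hb
  exact ⟨a, ha, b, hb.2, c, hc.2.2, (Ne.symm hb.1), (Ne.symm hc.2.1), (Ne.symm hc.1)⟩

lemma exists_four_of_card {V : Type*} {s : Finset V} (h : 4 ≤ s.card) :
    ∃ a ∈ s, ∃ b ∈ s, ∃ c ∈ s, ∃ d ∈ s,
      a ≠ b ∧ a ≠ c ∧ a ≠ d ∧ b ≠ c ∧ b ≠ d ∧ c ≠ d := by
  classical
  obtain ⟨a, ha⟩ := Finset.card_pos.mp (show 0 < s.card by omega)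
  have h3 : 3 ≤ (s.erase a).card := by
    have := Finset.card_erase_of_mem ha; omega
  obtain ⟨b, hb, c, hc, d, hd, hbc, hbd, hcd⟩ := exists_three_of_card h3
  rw [Finset.mem_erase] at hb hc hd
  exact ⟨a, ha, b, hb.2, c, hc.2, d, hd.2,
    Ne.symm hb.1, Ne.symm hc.1, Ne.symm hd.1, hbc, hbd, hcd⟩

noncomputable def cosetSplit {Ag : Type*} [CommGroup Ag] (B : Subgroup Ag) :
    Ag ≃ (Ag ⧸ B) × B where
  toFun g := (QuotientGroup.mk g,
    ⟨(Quotient.out (QuotientGroup.mk g : Ag ⧸ B))⁻¹ * g,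
      QuotientGroup.eq.mp (QuotientGroup.out_eq' (QuotientGroup.mk g))⟩)
  invFun p := Quotient.out p.1 * p.2
  left_inv g := mul_inv_cancel_left _ g
  right_inv p := by
    rcases p with ⟨q, h⟩
    have h1 : (QuotientGroup.mk (q.out * (h : Ag)) : Ag ⧸ B) = q := by
      have h2 : (QuotientGroup.mk (q.out * (h : Ag)) : Ag ⧸ B) = QuotientGroup.mk q.out :=
        QuotientGroup.eq.mpr (by
          rw [mul_inv_rev, mul_assoc, inv_mul_cancel, mul_one]
          exact B.inv_mem h.2)
      rw [h2, QuotientGroup.out_eq']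
    refine Prod.ext h1 (Subtype.ext ?_)
    simp only [h1]
    exact inv_mul_cancel_left _ _

lemma regular_sign {Ag : Type*} [CommGroup Ag] [Fintype Ag] [DecidableEq Ag]
    (b : Ag) (hb : b ≠ 1) :
    Equiv.Perm.sign (MulAction.toPermHom Ag Ag b)
      = (-(-1) ^ orderOf b) ^ Fintype.card (Ag ⧸ Subgroup.zpowers b) := by
  classical
  set B := Subgroup.zpowers b with hB
  set b' : B := ⟨b, Subgroup.mem_zpowers b⟩ with hb'
  have hb'1 : b' ≠ 1 := fun h => hb (by simpa [hb'] using congrArg Subtype.val h)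
  set σ : Equiv.Perm B := MulAction.toPermHom B B b' with hσ
  have hσapp : ∀ y : B, σ y = b' * y := fun y => rfl
  have hσc : σ.IsCycle := by
    refine ⟨1, ?_, ?_⟩
    · rw [hσapp, mul_one]; exact hb'1
    · intro y _
      obtain ⟨n, hn⟩ := y.2
      refine ⟨n, ?_⟩
      have h2 : σ ^ n = MulAction.toPermHom B B (b' ^ n) := (map_zpow _ _ _).symm
      rw [h2]
      show b' ^ n * 1 = y
      rw [mul_one]
      exact Subtype.ext (by rw [← hn]; exact congrArg _ rfl)
  have hsupp : σ.support = Finset.univ := by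
    ext y
    simp only [Equiv.Perm.mem_support, Finset.mem_univ, iff_true]
    rw [hσapp]
    intro h
    exact hb'1 (by
      have := mul_right_cancel (b := y) (a := b') (c := 1) (by rw [one_mul]; exact h)
      exact this)
  have hcardB : Fintype.card B = orderOf b := by
    rw [← Nat.card_eq_fintype_card, Nat.card_zpowers]
  have hsign : Equiv.Perm.sign σ = -(-1) ^ orderOf b := by
    rw [hσc.sign, hsupp, ← hcardB]; rfl
  have key : MulAction.toPermHom Ag Ag b =
      (cosetSplit B).symm.permCongr
        (Equiv.prodCongrRight (fun _ : Ag ⧸ B => σ)) := by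
    apply Equiv.ext
    intro g
    rw [Equiv.permCongr_apply, Equiv.symm_symm]
    show b * g = Quotient.out (QuotientGroup.mk g : Ag ⧸ B) *
      (b * ((Quotient.out (QuotientGroup.mk g : Ag ⧸ B))⁻¹ * g))
    rw [mul_left_comm, mul_inv_cancel_left]
  rw [key, Equiv.Perm.sign_permCongr, Equiv.Perm.sign_prodCongrRight,
    Finset.prod_const, hsign, Finset.card_univ]

lemma two_involutions {Ag : Type*} [CommGroup Ag] [Fintype Ag] [DecidableEq Ag]
    (hEven : Even (Fintype.card Ag))
    (hsign : ∀ a : Ag, Equiv.Perm.sign (MulAction.toPermHom Ag Ag a) = 1) :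
    ∃ u v : Ag, u * u = 1 ∧ v * v = 1 ∧ u ≠ 1 ∧ v ≠ 1 ∧ u ≠ v := by
  classical
  haveI : Fact (Nat.Prime 2) := ⟨Nat.prime_two⟩
  obtain ⟨t, ht⟩ := exists_prime_orderOf_dvd_card (G := Ag) 2 hEven.two_dvd
  obtain ⟨b, -, hmax⟩ := Finset.exists_max_image Finset.univ
    (fun c : Ag => (orderOf c).factorization 2) ⟨1, Finset.mem_univ 1⟩
  set k := (orderOf b).factorization 2 with hk
  have hk1 : 1 ≤ k := by
    have h := hmax t (Finset.mem_univ t)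
    rwa [ht, Nat.Prime.factorization_self Nat.prime_two] at h
  have hordpos : 0 < orderOf b := orderOf_pos b
  have hdvd : 2 ^ k ∣ orderOf b := Nat.ordProj_dvd _ 2
  set b' := b ^ (orderOf b / 2 ^ k) with hb'def
  have hordb' : orderOf b' = 2 ^ k := by
    rw [hb'def, orderOf_pow, Nat.gcd_eq_right (Nat.div_dvd_of_dvd hdvd),
      Nat.div_div_self hdvd hordpos.ne']
  have hb'1 : b' ≠ 1 := by
    intro h
    have h2 : (1:ℕ) < 2 ^ k := Nat.one_lt_two_pow_iff.mpr (by omega)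
    rw [h, orderOf_one] at hordb'
    omega
  set B' := Subgroup.zpowers b' with hB'
  have hQ : Even (Fintype.card (Ag ⧸ B')) := by
    have h1 := hsign b'
    rw [regular_sign b' hb'1, hordb'] at h1
    have h2 : ((-1 : ℤˣ)) ^ (2 ^ k) = 1 :=
      (Nat.even_pow.mpr ⟨even_two, by omega⟩).neg_one_pow
    rw [h2] at h1
    by_contra hodd
    rw [(Nat.not_even_iff_odd.mp hodd).neg_one_pow] at h1
    exact absurd h1 (by decide)
  -- the involution t₀ inside ⟨b'⟩
  set t₀ := b' ^ (2 ^ (k - 1)) with ht₀def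
  have hpowsum : 2 ^ (k - 1) + 2 ^ (k - 1) = 2 ^ k := by
    have h1 : k - 1 + 1 = k := by omega
    have h2 : 2 ^ (k - 1) + 2 ^ (k - 1) = 2 ^ (k - 1) * 2 := by ring
    rw [h2, ← pow_succ, h1]
  have ht₀sq : t₀ * t₀ = 1 := by
    rw [ht₀def, ← pow_add, hpowsum, ← hordb', pow_orderOf_eq_one]
  have ht₀1 : t₀ ≠ 1 := by
    intro h
    have hd := orderOf_dvd_iff_pow_eq_one.mpr h
    rw [hordb'] at hd
    have := Nat.le_of_dvd (by positivity) hd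
    have h2 : 2 ^ (k - 1) < 2 ^ k := Nat.pow_lt_pow_right one_lt_two (by omega)
    omega
  have ht₀B : t₀ ∈ B' := Subgroup.pow_mem _ (Subgroup.mem_zpowers b') _
  obtain ⟨cq, hcq⟩ := exists_prime_orderOf_dvd_card (G := Ag ⧸ B') 2 hQ.two_dvd
  set c := Quotient.out cq with hcdef
  have hmkc : (QuotientGroup.mk c : Ag ⧸ B') = cq := QuotientGroup.out_eq' cq
  have hcq1 : cq ≠ 1 := by
    intro h; rw [h, orderOf_one] at hcq; omega
  have hc2 : c * c ∈ B' := by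
    have h1 : (QuotientGroup.mk (c * c) : Ag ⧸ B') = 1 := by
      have : (QuotientGroup.mk (c * c) : Ag ⧸ B') = cq * cq := by
        rw [QuotientGroup.mk_mul, hmkc]
      rw [this, ← pow_two, ← hcq, pow_orderOf_eq_one]
    exact (QuotientGroup.eq_one_iff _).mp h1
  obtain ⟨j, hj⟩ := Subgroup.mem_zpowers_iff.mp hc2
  rcases Int.even_or_odd j with ⟨i, hi⟩ | ⟨i, hi⟩
  · -- j = i + i : get a second involution outside B'
    set u := c * (b' ^ i)⁻¹ with hudef
    have hu2 : u * u = 1 := by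
      rw [hudef, mul_mul_mul_comm, ← hj, hi, zpow_add]
      group
    have hcB : c ∉ B' := by
      intro h
      exact hcq1 (by rw [← hmkc, QuotientGroup.eq_one_iff]; exact h)
    have huB : u ∉ B' := by
      intro h
      exact hcB (by
        have : c = u * b' ^ i := by rw [hudef, inv_mul_cancel_right]
        rw [this]
        exact B'.mul_mem h (B'.zpow_mem (Subgroup.mem_zpowers b') i))
    have hu1 : u ≠ 1 := fun h => huB (h ▸ B'.one_mem)
    exact ⟨u, t₀, hu2, ht₀sq, hu1, ht₀1, fun h => huB (h ▸ ht₀B)⟩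
  · -- j = 2*i + 1 : contradiction with maximality of k
    exfalso
    set c' := c * (b' ^ i)⁻¹ with hc'def
    have hc'2 : c' * c' = b' := by
      rw [hc'def, mul_mul_mul_comm, ← hj, ← zpow_neg, ← zpow_add, ← zpow_add]
      rw [show j + (-i + -i) = (1:ℤ) by omega, zpow_one]
    have hpow1 : c' ^ 2 ^ (k + 1) = 1 := by
      rw [pow_succ, mul_comm (2 ^ k) 2, pow_mul, pow_two, hc'2, ← hordb',
        pow_orderOf_eq_one]
    have hpowk : c' ^ 2 ^ k ≠ 1 := by
      have h2 : 2 ^ k = 2 * 2 ^ (k - 1) := by omega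
      rw [h2, pow_mul, pow_two, hc'2, ← ht₀def]
      exact ht₀1
    have hdvd' : orderOf c' ∣ 2 ^ (k + 1) := orderOf_dvd_iff_pow_eq_one.mpr hpow1
    obtain ⟨m, hm, hmeq⟩ := (Nat.dvd_prime_pow Nat.prime_two).mp hdvd'
    have hmk : m = k + 1 := by
      by_contra hne
      have hmle : m ≤ k := by omega
      exact hpowk (orderOf_dvd_iff_pow_eq_one.mp (hmeq ▸ pow_dvd_pow 2 hmle))
    have := hmax c' (Finset.mem_univ c')
    rw [hmeq, hmk, Nat.Prime.factorization_pow Nat.prime_two,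
      Finsupp.single_eq_same] at this
    omega

/-- Let `n` be even and `A` an abelian group of order `n` that is not an
elementary abelian 2-group, and let `G = D(A)` (presented abstractly) act on the `n` left
cosets of `H = ⟨x⟩`, in such a way that every permutation of the cosets induced by an
element of `A` is even (`A ≤ Alt(n)`). Then `α(Γ_G) = 2` and there is an inverse-closed
`D ⊆ Der(G)` with `α(Cay(G, Der(G) \ D)) = 3`. -/
theorem stmt_17 {G : Type*} [Group G] [Fintype G]
    (A : Subgroup G) (hcomm : ∀ a ∈ A, ∀ b ∈ A, a * b = b * a)
    (hEven : Even (Nat.card A)) (hA2 : ∃ a ∈ A, a ^ 2 ≠ 1)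
    (x : G) (hx2 : x ^ 2 = 1) (hxA : x ∉ A) (hindex : A.index = 2)
    (hconj : ∀ a ∈ A, x * a * x = a⁻¹)
    [Fintype (G ⧸ Subgroup.zpowers x)] [DecidableEq (G ⧸ Subgroup.zpowers x)]
    (hAlt : ∀ a ∈ A,
      Equiv.Perm.sign (MulAction.toPermHom G (G ⧸ Subgroup.zpowers x) a) = 1) :
    indepNum (cayley G (derQ G (Subgroup.zpowers x))) = 2 ∧
    ∃ D : Set G, D ⊆ derQ G (Subgroup.zpowers x) ∧ (∀ d ∈ D, d⁻¹ ∈ D) ∧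
      indepNum (cayley G (derQ G (Subgroup.zpowers x) \ D)) = 3 := by
  classical
  have h1A : (1:G) ∈ A := A.one_mem
  have hx1 : x ≠ 1 := fun h => hxA (h ▸ h1A)
  have hxx : x * x = 1 := by rw [← pow_two]; exact hx2
  have hxinv : x⁻¹ = x := inv_eq_of_mul_eq_one_right hxx
  have hx2' : x ^ (2:ℤ) = 1 := by
    rw [show (2:ℤ) = ((2:ℕ):ℤ) from rfl, zpow_natCast, hx2]
  have hxa : ∀ a ∈ A, x * a = a⁻¹ * x := by
    intro a ha
    have h := hconj a ha
    calc x * a = x * a * x * x := by rw [mul_assoc (x*a) x x, hxx, mul_one]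
    _ = a⁻¹ * x := by rw [h]
  have hax : ∀ a ∈ A, a * x = x * a⁻¹ := by
    intro a ha
    have h := hxa a⁻¹ (A.inv_mem ha)
    rw [inv_inv] at h
    exact h.symm
  have hxnA : ∀ w ∈ A, x * w ∉ A := by
    intro w hw hmem
    exact hxA (by simpa using A.mul_mem hmem (A.inv_mem hw))
  have hcoset : ∀ g : G, g ∉ A → x * g ∈ A := by
    intro g hg
    rw [Subgroup.mul_mem_iff_of_index_two hindex]
    exact iff_of_false hxA hg
  have memH : ∀ g : G, g ∈ Subgroup.zpowers x ↔ g = 1 ∨ g = x := by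
    intro g
    constructor
    · rintro ⟨n, rfl⟩
      rcases Int.even_or_odd n with ⟨m, rfl⟩ | ⟨m, rfl⟩
      · left
        show x ^ (m + m) = 1
        rw [← two_mul, zpow_mul, hx2', one_zpow]
      · right
        show x ^ (2 * m + 1) = x
        rw [zpow_add, zpow_mul, hx2', one_zpow, one_mul, zpow_one]
    · rintro (h | h) <;> rw [h]
      · exact (Subgroup.zpowers x).one_mem
      · exact Subgroup.mem_zpowers x
  -- squares
  set Sq : G → Prop := fun g => ∃ a, a ∈ A ∧ a * a = g with hSq
  have sq_one : Sq 1 := ⟨1, h1A, one_mul 1⟩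
  have sq_memA : ∀ {g}, Sq g → g ∈ A := by
    rintro g ⟨a, ha, rfl⟩; exact A.mul_mem ha ha
  have sq_mul : ∀ {g h}, Sq g → Sq h → Sq (g * h) := by
    rintro g h ⟨a, ha, rfl⟩ ⟨b, hb, rfl⟩
    exact ⟨a * b, A.mul_mem ha hb, by
      rw [mul_assoc a b (a*b), ← mul_assoc b a b, hcomm b hb a ha, mul_assoc a b b,
        ← mul_assoc a a (b*b)]⟩
  have sq_inv : ∀ {g}, Sq g → Sq g⁻¹ := by
    rintro g ⟨a, ha, rfl⟩
    exact ⟨a⁻¹, A.inv_mem ha, by rw [mul_inv_rev]⟩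
  -- characterization of non-derangements
  have hder : ∀ g : G, g ∉ derQ G (Subgroup.zpowers x) ↔ (g = 1 ∨ ∃ w, Sq w ∧ g = x * w) := by
    intro g
    constructor
    · intro hg
      simp only [derQ, Set.mem_setOf_eq, not_forall, not_not] at hg
      obtain ⟨c, hc⟩ := hg
      obtain ⟨b, rfl⟩ := QuotientGroup.mk_surjective c
      rw [MulAction.Quotient.smul_mk, smul_eq_mul] at hc
      have hmem : (g * b)⁻¹ * b ∈ (Subgroup.zpowers x) := QuotientGroup.eq.mp hc
      rcases (memH _).mp hmem with h1 | h2
      · left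
        have h2 : g * b = b := inv_mul_eq_one.mp h1
        calc g = g * b * b⁻¹ := by rw [mul_inv_cancel_right]
        _ = b * b⁻¹ := by rw [h2]
        _ = 1 := mul_inv_cancel _
      · right
        have hgb : g = b * x * b⁻¹ := by
          have h3 : g * b = b * x := by
            have h4 := congrArg (fun z => b * z⁻¹) h2
            simpa [mul_inv_rev, hxinv, mul_assoc] using h4
          calc g = g * b * b⁻¹ := by rw [mul_inv_cancel_right]
          _ = b * x * b⁻¹ := by rw [h3]
        by_cases hb : b ∈ A
        · refine ⟨b⁻¹ * b⁻¹, ⟨b⁻¹, A.inv_mem hb, rfl⟩, ?_⟩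
          rw [hgb, hax b hb, mul_assoc]
        · have hc' : x * b ∈ A := hcoset b hb
          set c' := x * b with hc'def
          have hbc : b = x * c' := by rw [hc'def, ← mul_assoc, hxx, one_mul]
          refine ⟨c' * c', ⟨c', hc', rfl⟩, ?_⟩
          have hbinv : b⁻¹ = c'⁻¹ * x := by rw [hbc, mul_inv_rev, hxinv]
          calc g = b * x * b⁻¹ := hgb
          _ = x * c' * x * (c'⁻¹ * x) := by rw [hbc, mul_inv_rev, hxinv]
          _ = x * (x * c'⁻¹) * (c'⁻¹ * x) := by rw [mul_assoc x c' x, hax c' hc']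
          _ = c'⁻¹ * (c'⁻¹ * x) := by rw [← mul_assoc x x c'⁻¹, hxx, one_mul]
          _ = (c'⁻¹ * c'⁻¹) * x := by rw [mul_assoc]
          _ = x * (c'⁻¹ * c'⁻¹)⁻¹ := hax _ (A.mul_mem (A.inv_mem hc') (A.inv_mem hc'))
          _ = x * (c' * c') := by rw [mul_inv_rev, inv_inv]
    · rintro (rfl | ⟨w, ⟨a, ha, rfl⟩, rfl⟩)
      · intro hd
        exact hd (QuotientGroup.mk (1:G)) (one_smul _ _)
      · intro hd
        apply hd (QuotientGroup.mk a⁻¹)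
        rw [MulAction.Quotient.smul_mk, smul_eq_mul]
        apply QuotientGroup.eq.mpr
        have h1 : x * (a * a) * a⁻¹ = x * a := by group
        rw [h1]
        have h2 : (x * a)⁻¹ * a⁻¹ = x := by
          calc (x * a)⁻¹ * a⁻¹ = a⁻¹ * x * a⁻¹ := by rw [mul_inv_rev, hxinv]
          _ = x * a * a⁻¹ := by rw [← hxa a ha]
          _ = x := by rw [mul_inv_cancel_right]
        rw [h2]
        exact (memH x).mpr (Or.inr rfl)
  have hderinv : ∀ g ∈ derQ G (Subgroup.zpowers x), g⁻¹ ∈ derQ G (Subgroup.zpowers x) := by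
    intro g hg c hc
    apply hg (g⁻¹ • c)
    rw [smul_inv_smul, hc]
  have hinvol : ∀ g : G, g ∉ A → g * g = 1 := by
    intro g hg
    have hc' : x * g ∈ A := hcoset g hg
    have hbg : g = x * (x * g) := by rw [← mul_assoc, hxx, one_mul]
    calc g * g = (x * (x*g)) * (x * (x*g)) := by rw [← hbg]
    _ = x * (((x*g) * x) * (x*g)) := by group
    _ = x * ((x * (x*g)⁻¹) * (x*g)) := by rw [hax _ hc']
    _ = x * (x * ((x*g)⁻¹ * (x*g))) := by rw [mul_assoc]
    _ = 1 := by rw [inv_mul_cancel, mul_one, hxx]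
  have hxwinv : ∀ w, w ∈ A → (x*w)⁻¹ = x*w := by
    intro w hw
    exact inv_eq_of_mul_eq_one_right (hinvol _ (hxnA w hw))
  -- PART 1
  have part1 : indepNum (cayley G (derQ G (Subgroup.zpowers x))) = 2 := by
    apply indepNum_eq_of
    · refine ⟨{1, x}, ?_, ?_⟩
      · intro a ha b hb hne
        rintro ⟨hne', hmem, hmem'⟩
        have hxnd : x ∉ derQ G (Subgroup.zpowers x) := (hder x).mpr (Or.inr ⟨1, sq_one, (mul_one x).symm⟩)
        simp only [Finset.coe_insert, Set.mem_insert_iff, Finset.coe_singleton,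
          Set.mem_singleton_iff] at ha hb
        rcases ha with rfl | rfl <;> rcases hb with rfl | rfl
        · exact hne rfl
        · exact hxnd (by simpa using hmem)
        · exact hxnd (by simpa [hxinv] using hmem)
        · exact hne rfl
      · rw [Finset.card_insert_of_notMem (by simpa using hx1.symm), Finset.card_singleton]
    · intro s hs
      by_contra hcard
      obtain ⟨a, ha, b, hb, c, hc, hab, hac, hbc⟩ := exists_three_of_card (s := s) (by omega)
      have key : ∀ p ∈ s, ∀ q ∈ s, p ≠ q → ∃ w, Sq w ∧ p⁻¹ * q = x * w := by
        intro p hp q hq hpq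
        have hnadj := hs (Finset.mem_coe.mpr hp) (Finset.mem_coe.mpr hq) hpq
        have hnot : p⁻¹ * q ∉ derQ G (Subgroup.zpowers x) := by
          intro hin
          exact hnadj ⟨hpq, hin, by
            rw [show q⁻¹ * p = (p⁻¹ * q)⁻¹ by group]
            exact hderinv _ hin⟩
        rcases (hder _).mp hnot with h1 | ⟨w, hw, heq⟩
        · exact absurd (inv_mul_eq_one.mp h1) hpq
        · exact ⟨w, hw, heq⟩
      obtain ⟨w1, hw1, he1⟩ := key a ha b hb hab
      obtain ⟨w2, hw2, he2⟩ := key a ha c hc hac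
      obtain ⟨w3, hw3, he3⟩ := key b hb c hc hbc
      have hbc' : b⁻¹ * c = w1⁻¹ * w2 := by
        have h4 : b⁻¹ * c = (a⁻¹*b)⁻¹ * (a⁻¹*c) := by group
        rw [h4, he1, he2, mul_inv_rev, hxinv, mul_assoc, ← mul_assoc x x w2, hxx, one_mul]
      apply hxnA w3 (sq_memA hw3)
      rw [show x * w3 = w1⁻¹ * w2 from he3 ▸ hbc']
      exact A.mul_mem (A.inv_mem (sq_memA hw1)) (sq_memA hw2)
  -- PART 2 : setup
  letI cgA : CommGroup ↥A :=
    { (inferInstance : Group ↥A) with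
      mul_comm := fun a b => Subtype.ext (hcomm ↑a a.2 ↑b b.2) }
  letI : Fintype ↥A := Fintype.ofFinite _
  letI : DecidableEq ↥A := Classical.decEq _
  have φinj : Function.Injective (fun a : ↥A => (QuotientGroup.mk ↑a : G ⧸ (Subgroup.zpowers x))) := by
    intro a b hab
    have h1 : ((a:G))⁻¹ * (b:G) ∈ (Subgroup.zpowers x) := QuotientGroup.eq.mp hab
    rcases (memH _).mp h1 with h | h
    · exact Subtype.ext (inv_mul_eq_one.mp h)
    · exact absurd (h ▸ A.mul_mem (A.inv_mem a.2) b.2) hxA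
  have φsurj : Function.Surjective (fun a : ↥A => (QuotientGroup.mk ↑a : G ⧸ (Subgroup.zpowers x))) := by
    intro c
    obtain ⟨b, rfl⟩ := QuotientGroup.mk_surjective c
    by_cases hb : b ∈ A
    · exact ⟨⟨b, hb⟩, rfl⟩
    · refine ⟨⟨(x*b)⁻¹, A.inv_mem (hcoset b hb)⟩, ?_⟩
      show (QuotientGroup.mk ((x*b)⁻¹) : G ⧸ (Subgroup.zpowers x)) = QuotientGroup.mk b
      apply QuotientGroup.eq.mpr
      rw [inv_inv, mul_assoc, hinvol b hb, mul_one]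
      exact (memH x).mpr (Or.inr rfl)
  set φ : ↥A ≃ G ⧸ (Subgroup.zpowers x) := Equiv.ofBijective _ ⟨φinj, φsurj⟩ with hφ
  have hφapp : ∀ a : ↥A, φ a = QuotientGroup.mk ↑a := fun a => rfl
  have hsignA : ∀ a : ↥A, Equiv.Perm.sign (MulAction.toPermHom ↥A ↥A a) = 1 := by
    intro a
    have hkey : MulAction.toPermHom G (G ⧸ (Subgroup.zpowers x)) ↑a
        = φ.permCongr (MulAction.toPermHom ↥A ↥A a) := by
      apply Equiv.ext
      intro q
      obtain ⟨c, rfl⟩ := φ.surjective q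
      rw [Equiv.permCongr_apply, Equiv.symm_apply_apply]
      show (↑a : G) • φ c = φ (a • c)
      rw [hφapp, hφapp, MulAction.Quotient.smul_mk]
      rfl
    have h2 := hAlt ↑a a.2
    rw [hkey, Equiv.Perm.sign_permCongr] at h2
    exact h2
  obtain ⟨u, v, huu, hvv, hu1, hv1, huv⟩ := two_involutions
    (by rw [← Nat.card_eq_fintype_card]; exact hEven) hsignA
  -- counting squares
  set f : ↥A → ↥A := fun a => a * a with hf
  set S : Finset ↥A := Finset.univ.image f with hS
  have hfmem : ∀ a : ↥A, f a ∈ S := fun a => Finset.mem_image_of_mem f (Finset.mem_univ a)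
  have hSmul : ∀ p ∈ S, ∀ q ∈ S, p * q ∈ S := by
    intro p hp q hq
    rw [hS, Finset.mem_image] at hp hq
    obtain ⟨a, -, rfl⟩ := hp; obtain ⟨b, -, rfl⟩ := hq
    have : f (a*b) = f a * f b := mul_mul_mul_comm a b a b
    exact this ▸ hfmem (a*b)
  have hSinv : ∀ p ∈ S, p⁻¹ ∈ S := by
    intro p hp
    rw [hS, Finset.mem_image] at hp
    obtain ⟨a, -, rfl⟩ := hp
    have : f a⁻¹ = (f a)⁻¹ := (mul_inv_rev a a).symm
    exact this ▸ hfmem a⁻¹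
  have hsq1 : ∀ w : ↥A, w * w = 1 → ∀ a : ↥A, f (a*w) = f a := by
    intro w hw a
    show (a*w)*(a*w) = a*a
    rw [mul_mul_mul_comm, hw, mul_one]
  have huv2 : (u*v)*(u*v) = 1 := by rw [mul_mul_mul_comm, huu, hvv, mul_one]
  have hvinv : v⁻¹ = v := inv_eq_of_mul_eq_one_right hvv
  have hfour : ∀ y ∈ S, 4 ≤ (Finset.univ.filter (fun z : ↥A => f z = y)).card := by
    intro y hy
    rw [hS, Finset.mem_image] at hy
    obtain ⟨a, -, rfl⟩ := hy
    have hsub : ({a, a*u, a*v, a*(u*v)} : Finset ↥A)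
        ⊆ Finset.univ.filter (fun z : ↥A => f z = f a) := by
      intro z hz
      simp only [Finset.mem_insert, Finset.mem_singleton] at hz
      rw [Finset.mem_filter]
      refine ⟨Finset.mem_univ z, ?_⟩
      rcases hz with rfl | rfl | rfl | rfl
      · rfl
      · exact hsq1 u huu a
      · exact hsq1 v hvv a
      · exact hsq1 (u*v) huv2 a
    have hne1 : a ≠ a*u := fun h => hu1 (left_eq_mul.mp h)
    have hne2 : a ≠ a*v := fun h => hv1 (left_eq_mul.mp h)
    have huvne : u*v ≠ 1 := by
      intro h
      exact huv (by rw [← hvinv]; exact eq_inv_of_mul_eq_one_left h)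
    have hne3 : a ≠ a*(u*v) := fun h => huvne (left_eq_mul.mp h)
    have hne4 : a*u ≠ a*v := fun h => huv (mul_left_cancel h)
    have hne5 : a*u ≠ a*(u*v) := by
      intro h
      exact hv1 (left_eq_mul.mp (mul_left_cancel h))
    have hne6 : a*v ≠ a*(u*v) := by
      intro h
      exact hu1 (right_eq_mul.mp (mul_left_cancel h))
    have hcard4 : ({a, a*u, a*v, a*(u*v)} : Finset ↥A).card = 4 := by
      rw [Finset.card_insert_of_notMem (by simp [hne1, hne2, hne3]),
        Finset.card_insert_of_notMem (by simp [hne4, hne5]),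
        Finset.card_insert_of_notMem (by simp [hne6]),
        Finset.card_singleton]
    calc 4 = ({a, a*u, a*v, a*(u*v)} : Finset ↥A).card := hcard4.symm
    _ ≤ _ := Finset.card_le_card hsub
  have hcount : 4 * S.card ≤ Fintype.card ↥A := by
    have h1 : (Finset.univ : Finset ↥A).card
        = ∑ y ∈ S, (Finset.univ.filter (fun z : ↥A => f z = y)).card :=
      Finset.card_eq_sum_card_fiberwise (fun z _ => hfmem z)
    rw [Finset.card_univ] at h1
    calc 4 * S.card = ∑ _y ∈ S, 4 := by rw [Finset.sum_const, smul_eq_mul, mul_comm]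
    _ ≤ ∑ y ∈ S, (Finset.univ.filter (fun z : ↥A => f z = y)).card := Finset.sum_le_sum hfour
    _ = Fintype.card ↥A := h1.symm
  have hSpos : 0 < S.card := Finset.card_pos.mpr ⟨f 1, hfmem 1⟩
  have hoff : ∀ (T : Finset ↥A), T.card < Fintype.card ↥A → ∃ z, z ∉ T := by
    intro T hT
    by_contra hall
    push_neg at hall
    have h2 := Finset.card_le_card (fun z _ => hall z : (Finset.univ : Finset ↥A) ⊆ T)
    rw [Finset.card_univ] at h2
    omega
  obtain ⟨s0, hs0⟩ := hoff S (by omega)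
  -- construct d
  obtain ⟨a0, ha0A, ha0sq⟩ := hA2
  have hah2 : (⟨a0, ha0A⟩ : ↥A) * ⟨a0, ha0A⟩ ≠ 1 := by
    intro h
    apply ha0sq
    rw [pow_two]
    exact congrArg Subtype.val h
  have hdexists : ∃ dh : ↥A, dh ∉ S ∧ dh * dh ≠ 1 := by
    set ah : ↥A := ⟨a0, ha0A⟩
    by_cases h0 : s0 * s0 = 1
    · by_cases hahS : ah ∈ S
      · refine ⟨s0 * ah, ?_, ?_⟩
        · intro hmem
          apply hs0
          have h3 : (s0 * ah) * ah⁻¹ ∈ S := hSmul _ hmem _ (hSinv _ hahS)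
          rwa [mul_inv_cancel_right] at h3
        · rw [mul_mul_mul_comm, h0, one_mul]
          exact hah2
      · exact ⟨ah, hahS, hah2⟩
    · exact ⟨s0, hs0, h0⟩
  obtain ⟨dh, hdhS, hdh2⟩ := hdexists
  -- construct e₁
  have hTcard : (S ∪ S.image (fun p => dh * p)).card < Fintype.card ↥A := by
    have h1 := Finset.card_union_le S (S.image (fun p => dh * p))
    have h2 := Finset.card_image_le (f := fun p => dh * p) (s := S)
    omega
  obtain ⟨eh, heh⟩ := hoff _ hTcard
  have hehS : eh ∉ S := fun h => heh (Finset.mem_union_left _ h)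
  have hehdS : ∀ p ∈ S, eh ≠ dh * p := by
    intro p hp h
    exact heh (Finset.mem_union_right _ (Finset.mem_image.mpr ⟨p, hp, h.symm⟩))
  -- push to G
  set d : G := ↑dh with hd
  set e₁ : G := ↑eh with he₁def
  set e₂ : G := d * e₁ with he₂def
  have hdA : d ∈ A := dh.2
  have he₁A : e₁ ∈ A := eh.2
  have he₂A : e₂ ∈ A := A.mul_mem hdA he₁A
  have hd2 : d * d ≠ 1 := fun h => hdh2 (Subtype.ext h)
  have hdSq : ¬ Sq d := by
    rintro ⟨a, ha, haa⟩
    exact hdhS (Finset.mem_image.mpr ⟨⟨a, ha⟩, Finset.mem_univ _, Subtype.ext haa⟩)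
  have he₁Sq : ¬ Sq e₁ := by
    rintro ⟨a, ha, haa⟩
    exact hehS (Finset.mem_image.mpr ⟨⟨a, ha⟩, Finset.mem_univ _, Subtype.ext haa⟩)
  have he₁dSq : ∀ w, Sq w → e₁ ≠ d * w := by
    rintro w ⟨a, ha, rfl⟩ h
    exact hehdS (f ⟨a, ha⟩) (hfmem _) (Subtype.ext h)
  have hd1 : d ≠ 1 := fun h => hdSq (h ▸ sq_one)
  have hdinvSq : ∀ w, Sq w → e₁ ≠ d⁻¹ * w := by
    intro w hw h
    apply he₁dSq ((d⁻¹ * d⁻¹) * w) (sq_mul ⟨d⁻¹, A.inv_mem hdA, rfl⟩ hw)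
    rw [h]; group
  have he₂Sq : ¬ Sq e₂ := by
    intro hs
    exact hdinvSq e₂ hs (by rw [he₂def]; group)
  have he₁1 : e₁ ≠ 1 := fun h => he₁Sq (h ▸ sq_one)
  have he₁e₂ : e₁ ≠ e₂ := by
    intro h
    apply hd1
    have h2 : d * e₁ = 1 * e₁ := by rw [← he₂def, ← h, one_mul]
    exact mul_right_cancel h2
  have hddinv : d * d ≠ d⁻¹ := by
    intro h
    apply hdSq
    exact ⟨d⁻¹, A.inv_mem hdA, by rw [← mul_inv_rev, h, inv_inv]⟩
  -- the set D and the predicate W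
  set W : G → Prop := fun w => Sq w ∨ w = e₁ ∨ w = e₂ with hWdef
  have hWi : ∀ w, (Sq w ∨ w = e₁ ∨ w = e₂) → W w := fun w h => h
  have hWe : ∀ w, W w → (Sq w ∨ w = e₁ ∨ w = e₂) := fun w h => h
  have hWA : ∀ w, W w → w ∈ A := by
    intro w hw
    rcases hWe w hw with h | rfl | rfl
    exacts [sq_memA h, he₁A, he₂A]
  set D : Set G := {d, d⁻¹, x*e₁, x*e₂} with hDdef
  have hmemD : ∀ g, g ∈ D ↔ (g = d ∨ g = d⁻¹ ∨ g = x*e₁ ∨ g = x*e₂) := by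
    intro g
    simp [hDdef, Set.mem_insert_iff, Set.mem_singleton_iff]
  have hcommA : ∀ p q : G, p ∈ A → q ∈ A → p * q = q * p := fun p q hp hq => hcomm p hp q hq
  have hderm : ∀ g : G, g ≠ 1 → (∀ w, Sq w → g ≠ x * w) →
      g ∈ derQ G (Subgroup.zpowers x) := by
    intro g h1 h2
    by_contra hn
    rcases (hder g).mp hn with h | ⟨w, hw, h⟩
    exacts [h1 h, h2 w hw h]
  have hDder : D ⊆ derQ G (Subgroup.zpowers x) := by
    intro g hg
    rcases (hmemD g).mp hg with rfl | rfl | rfl | rfl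
    · exact hderm d hd1 (fun w hw h => hxnA w (sq_memA hw) (h ▸ hdA))
    · exact hderm d⁻¹ (fun h => hd1 (inv_eq_one.mp h))
        (fun w hw h => hxnA w (sq_memA hw) (h ▸ A.inv_mem hdA))
    · refine hderm (x*e₁) ?_ (fun w hw h => he₁Sq ((mul_left_cancel h) ▸ hw))
      intro h
      apply hxA
      rw [show x = e₁⁻¹ from eq_inv_of_mul_eq_one_left h]
      exact A.inv_mem he₁A
    · refine hderm (x*e₂) ?_ (fun w hw h => he₂Sq ((mul_left_cancel h) ▸ hw))
      intro h
      apply hxA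
      rw [show x = e₂⁻¹ from eq_inv_of_mul_eq_one_left h]
      exact A.inv_mem he₂A
  have hDinv : ∀ g ∈ D, g⁻¹ ∈ D := by
    intro g hg
    rcases (hmemD g).mp hg with rfl | rfl | rfl | rfl
    · exact (hmemD _).mpr (Or.inr (Or.inl rfl))
    · exact (hmemD _).mpr (Or.inl (inv_inv d))
    · exact (hmemD _).mpr (Or.inr (Or.inr (Or.inl (hxwinv e₁ he₁A))))
    · exact (hmemD _).mpr (Or.inr (Or.inr (Or.inr (hxwinv e₂ he₂A))))
  have hCinv : ∀ g ∈ derQ G (Subgroup.zpowers x) \ D,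
      g⁻¹ ∈ derQ G (Subgroup.zpowers x) \ D := by
    rintro g ⟨hg1, hg2⟩
    exact ⟨hderinv g hg1, fun hmem => hg2 (inv_inv g ▸ hDinv g⁻¹ hmem)⟩
  have hshape : ∀ p q : G, p ≠ q →
      ¬ (cayley G (derQ G (Subgroup.zpowers x) \ D)).Adj p q →
      (p⁻¹ * q = d ∨ p⁻¹ * q = d⁻¹ ∨ ∃ w, W w ∧ p⁻¹ * q = x * w) := by
    intro p q hpq hnadj
    have hnotC : p⁻¹ * q ∉ derQ G (Subgroup.zpowers x) \ D := by
      intro hin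
      apply hnadj
      refine ⟨hpq, hin, ?_⟩
      rw [show q⁻¹ * p = (p⁻¹ * q)⁻¹ by group]
      exact hCinv _ hin
    by_cases hDm : p⁻¹ * q ∈ D
    · rcases (hmemD _).mp hDm with h | h | h | h
      · exact Or.inl h
      · exact Or.inr (Or.inl h)
      · exact Or.inr (Or.inr ⟨e₁, hWi _ (Or.inr (Or.inl rfl)), h⟩)
      · exact Or.inr (Or.inr ⟨e₂, hWi _ (Or.inr (Or.inr rfl)), h⟩)
    · have hnd : p⁻¹ * q ∉ derQ G (Subgroup.zpowers x) := fun hin => hnotC ⟨hin, hDm⟩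
      rcases (hder _).mp hnd with h | ⟨w, hw, h⟩
      · exact absurd (inv_mul_eq_one.mp h) hpq
      · exact Or.inr (Or.inr ⟨w, hWi _ (Or.inl hw), h⟩)
  -- the key pair lemma
  have hpair : ∀ w w' : G, W w → W w' → (w' = w * d ∨ w' = w * d⁻¹) →
      (w = e₁ ∧ w' = e₂) ∨ (w = e₂ ∧ w' = e₁) := by
    intro w w' hw hw' hrel
    rcases hWe w hw with hsw | hw1 | hw2
    · exfalso
      rcases hWe w' hw' with hsw' | hw'1 | hw'2
      · rcases hrel with h | h
        · apply hdSq
          have h2 : d = w⁻¹ * w' := by rw [h]; group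
          exact h2 ▸ sq_mul (sq_inv hsw) hsw'
        · apply hdSq
          have h2 : d⁻¹ = w⁻¹ * w' := by rw [h]; group
          have h3 := sq_mul (sq_inv hsw) hsw'
          rw [← h2] at h3
          exact inv_inv d ▸ sq_inv h3
      · rcases hrel with h | h
        · apply he₁dSq w hsw
          rw [← hw'1, h, hcommA w d (sq_memA hsw) hdA]
        · apply hdinvSq w hsw
          rw [← hw'1, h, hcommA w d⁻¹ (sq_memA hsw) (A.inv_mem hdA)]
      · rcases hrel with h | h
        · apply he₁Sq
          have hE : d * e₁ = d * w := by
            rw [← he₂def, ← hw'2, h, hcommA w d (sq_memA hsw) hdA]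
          rw [mul_left_cancel hE]
          exact hsw
        · apply he₁Sq
          have hE : e₁ = (d⁻¹ * d⁻¹) * w := by
            have h2 : d * e₁ = w * d⁻¹ := by rw [← he₂def, ← hw'2, h]
            have h3 : e₁ = d⁻¹ * (w * d⁻¹) := by rw [← h2]; group
            rw [h3, hcommA w d⁻¹ (sq_memA hsw) (A.inv_mem hdA)]
            group
          rw [hE]
          exact sq_mul ⟨d⁻¹, A.inv_mem hdA, rfl⟩ hsw
    · rcases hWe w' hw' with hsw' | hw'1 | hw'2
      · exfalso
        rcases hrel with h | h
        · apply hdinvSq w' hsw'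
          rw [h, hw1, hcommA e₁ d he₁A hdA, inv_mul_cancel_left]
        · apply he₁dSq w' hsw'
          rw [h, hw1, hcommA e₁ d⁻¹ he₁A (A.inv_mem hdA), mul_inv_cancel_left]
      · exfalso
        rcases hrel with h | h
        · apply hd1
          have h2 : w * d = w * 1 := by rw [mul_one, ← h, hw'1, ← hw1]
          exact mul_left_cancel h2
        · apply hd1
          have h2 : w * d⁻¹ = w * 1 := by rw [mul_one, ← h, hw'1, ← hw1]
          exact inv_eq_one.mp (mul_left_cancel h2)
      · exact Or.inl ⟨hw1, hw'2⟩
    · rcases hWe w' hw' with hsw' | hw'1 | hw'2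
      · exfalso
        rcases hrel with h | h
        · apply he₁Sq
          have h5 : w' = (d*d)*e₁ := by
            rw [h, hw2, he₂def, mul_assoc, hcommA e₁ d he₁A hdA, ← mul_assoc]
          have hE : e₁ = (d⁻¹*d⁻¹)*w' := by rw [h5]; group
          rw [hE]
          exact sq_mul ⟨d⁻¹, A.inv_mem hdA, rfl⟩ hsw'
        · apply he₁Sq
          have h5 : w' = e₁ := by
            rw [h, hw2, he₂def, mul_assoc,
              hcommA e₁ d⁻¹ he₁A (A.inv_mem hdA), mul_inv_cancel_left]
          exact h5 ▸ hsw'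
      · exact Or.inr ⟨hw2, hw'1⟩
      · exfalso
        rcases hrel with h | h
        · apply hd1
          have h2 : w * d = w * 1 := by rw [mul_one, ← h, hw'2, ← hw2]
          exact mul_left_cancel h2
        · apply hd1
          have h2 : w * d⁻¹ = w * 1 := by rw [mul_one, ← h, hw'2, ← hw2]
          exact inv_eq_one.mp (mul_left_cancel h2)
  -- helpers
  have hrinvx : ∀ r, r ∈ A → r⁻¹ * x = x * r := by
    intro r hr
    rw [hax r⁻¹ (A.inv_mem hr), inv_inv]
  have hratio : ∀ r w : G, r ∈ A → w ∈ A → r⁻¹ * (x*w) = x*(w*r) := by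
    intro r w hr hw
    rw [← mul_assoc, hrinvx r hr, mul_assoc, hcommA r w hr hw]
  have hxsh : ∀ r w : G, (r = d ∨ r = d⁻¹) → W w →
      ((x*(w*r)) = d ∨ (x*(w*r)) = d⁻¹ ∨ ∃ w'', W w'' ∧ (x*(w*r)) = x * w'') →
      W (w * r) := by
    intro r w hr hw hsh
    have hrA : r ∈ A := by rcases hr with rfl | rfl; exacts [hdA, A.inv_mem hdA]
    have hwrA : w * r ∈ A := A.mul_mem (hWA w hw) hrA
    rcases hsh with h | h | ⟨w'', hw'', h⟩
    · exact absurd (show x*(w*r) ∈ A by rw [h]; exact hdA) (hxnA _ hwrA)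
    · exact absurd (show x*(w*r) ∈ A by rw [h]; exact A.inv_mem hdA) (hxnA _ hwrA)
    · have h2 : w * r = w'' := mul_left_cancel h
      rw [h2]; exact hw''
  have hFFpair : ∀ (wa wb : G), W wa → W wb →
      (wa⁻¹*wb = d ∨ wa⁻¹*wb = d⁻¹ ∨ ∃ w, W w ∧ wa⁻¹*wb = x*w) →
      (wa = e₁ ∧ wb = e₂) ∨ (wa = e₂ ∧ wb = e₁) := by
    intro wa wb hwa hwb hsh
    apply hpair wa wb hwa hwb
    rcases hsh with h | h | ⟨w, hw, h⟩
    · left; rw [← h]; group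
    · right; rw [← h]; group
    · exact absurd (show x*w ∈ A by
        rw [← h]; exact A.mul_mem (A.inv_mem (hWA wa hwa)) (hWA wb hwb))
        (hxnA w (hWA w hw))
  have hRR : ∀ r r' : G, (r = d ∨ r = d⁻¹) → (r' = d ∨ r' = d⁻¹) → r ≠ r' →
      (r⁻¹ * r' = d ∨ r⁻¹ * r' = d⁻¹ ∨ ∃ w, W w ∧ r⁻¹ * r' = x * w) → False := by
    intro r r' hr hr' hne hsh
    have hrA : r ∈ A := by rcases hr with rfl | rfl; exacts [hdA, A.inv_mem hdA]
    have hr'A : r' ∈ A := by rcases hr' with rfl | rfl; exacts [hdA, A.inv_mem hdA]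
    rcases hsh with h | h | ⟨w, hw, h⟩
    · rcases hr with rfl | rfl <;> rcases hr' with rfl | rfl
      · exact hne rfl
      · exact hdSq ⟨d⁻¹, A.inv_mem hdA, h⟩
      · rw [inv_inv] at h
        exact hd1 (mul_right_cancel (show d*d = 1*d by rw [one_mul]; exact h))
      · exact hne rfl
    · rcases hr with rfl | rfl <;> rcases hr' with rfl | rfl
      · exact hne rfl
      · exact hd1 (inv_eq_one.mp
          (mul_right_cancel (show d⁻¹*d⁻¹ = 1*d⁻¹ by rw [one_mul]; exact h)))
      · rw [inv_inv] at h
        exact hddinv h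
      · exact hne rfl
    · exact hxnA w (hWA w hw)
        (show x*w ∈ A by rw [← h]; exact A.mul_mem (A.inv_mem hrA) hr'A)
  have hRFF : ∀ ρ wa wb : G, (ρ = d ∨ ρ = d⁻¹) → W wa → W wb →
      ((wa = e₁ ∧ wb = e₂) ∨ (wa = e₂ ∧ wb = e₁)) →
      W (wa * ρ) → W (wb * ρ) → False := by
    intro ρ wa wb hρ hwa hwb hp0 hWa hWb
    have hpa := hpair wa (wa*ρ) hwa hWa
      (by rcases hρ with rfl | rfl; exacts [Or.inl rfl, Or.inr rfl])
    have hpb := hpair wb (wb*ρ) hwb hWb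
      (by rcases hρ with rfl | rfl; exacts [Or.inl rfl, Or.inr rfl])
    rcases hp0 with ⟨ha1, hb2⟩ | ⟨ha2, hb1⟩
    · rcases hpa with ⟨-, hae⟩ | ⟨hae, -⟩
      · have h2 : wa * ρ = wa * d := by
          rw [hae, he₂def, ha1, hcommA d e₁ hdA he₁A]
        have hρd : ρ = d := mul_left_cancel h2
        rcases hpb with ⟨hb1', -⟩ | ⟨-, hbe⟩
        · exact he₁e₂ (hb1'.symm.trans hb2)
        · apply hd2
          have h4 : (d*e₁)*d = e₁ := by rw [← he₂def, ← hb2, ← hρd, hbe]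
          have h5 : (d*d)*e₁ = 1*e₁ := by
            rw [one_mul, mul_assoc, hcommA d e₁ hdA he₁A, ← mul_assoc, h4]
          exact mul_right_cancel h5
      · exact he₁e₂ (ha1.symm.trans hae)
    · rcases hpa with ⟨hae1, -⟩ | ⟨-, haE⟩
      · exact he₁e₂ (hae1.symm.trans ha2)
      · have h2 : wa * ρ = wa * d⁻¹ := by
          rw [haE, ha2, he₂def, mul_assoc,
            hcommA e₁ d⁻¹ he₁A (A.inv_mem hdA), mul_inv_cancel_left]
        have hρd : ρ = d⁻¹ := mul_left_cancel h2
        rcases hpb with ⟨-, hbE⟩ | ⟨hbE2, -⟩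
        · apply hd2
          have h3 : e₁ * d⁻¹ = e₁ * d := by
            calc e₁ * d⁻¹ = wb * ρ := by rw [hb1, hρd]
            _ = e₂ := hbE
            _ = e₁ * d := by rw [he₂def, hcommA d e₁ hdA he₁A]
          have h4 := mul_left_cancel h3
          have h5 : d*d = d*d⁻¹ := congrArg (fun z => d*z) h4.symm
          rw [h5, mul_inv_cancel]
        · exact he₁e₂ (hb1.symm.trans hbE2)
  refine ⟨part1, D, hDder, hDinv, ?_⟩
  apply indepNum_eq_of
  · -- the independent set {1, d, x*e₁}
    have he₂x : d⁻¹ * (x * e₁) = x * e₂ := by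
      rw [← mul_assoc, hrinvx d hdA, mul_assoc, ← he₂def]
    have he₂x' : (x*e₁)⁻¹ * d = x * e₂ := by
      rw [hxwinv e₁ he₁A, mul_assoc, hcommA e₁ d he₁A hdA, ← he₂def]
    have hne1d : (1:G) ≠ d := fun h => hd1 h.symm
    have hne1x : (1:G) ≠ x*e₁ := by
      intro h
      apply hxA
      rw [show x = e₁⁻¹ from eq_inv_of_mul_eq_one_left h.symm]
      exact A.inv_mem he₁A
    have hnedx : d ≠ x*e₁ := fun h => hxnA e₁ he₁A (h ▸ hdA)
    refine ⟨{1, d, x*e₁}, ?_, ?_⟩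
    · intro p hp q hq hne
      rintro ⟨hne', hmem, hmem'⟩
      apply hmem.2
      simp only [Finset.coe_insert, Set.mem_insert_iff, Finset.coe_singleton,
        Set.mem_singleton_iff] at hp hq
      rcases hp with rfl | rfl | rfl <;> rcases hq with rfl | rfl | rfl
      · exact absurd rfl hne
      · rw [inv_one, one_mul]; exact (hmemD d).mpr (Or.inl rfl)
      · rw [inv_one, one_mul]; exact (hmemD _).mpr (Or.inr (Or.inr (Or.inl rfl)))
      · rw [mul_one]; exact (hmemD _).mpr (Or.inr (Or.inl rfl))
      · exact absurd rfl hne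
      · rw [he₂x]; exact (hmemD _).mpr (Or.inr (Or.inr (Or.inr rfl)))
      · rw [mul_one, hxwinv e₁ he₁A]; exact (hmemD _).mpr (Or.inr (Or.inr (Or.inl rfl)))
      · rw [he₂x']; exact (hmemD _).mpr (Or.inr (Or.inr (Or.inr rfl)))
      · exact absurd rfl hne
    · rw [Finset.card_insert_of_notMem (by simp [hne1d, hne1x]),
        Finset.card_insert_of_notMem (by simp [hnedx]), Finset.card_singleton]
  · -- upper bound : no independent set of size 4
    intro s hs
    by_contra hcard
    obtain ⟨g1, hg1, g2, hg2, g3, hg3, g4, hg4, h12, h13, h14, h23, h24, h34⟩ :=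
      exists_four_of_card (s := s) (by omega)
    have hget : ∀ p ∈ s, ∀ q ∈ s, p ≠ q →
        (p⁻¹ * q = d ∨ p⁻¹ * q = d⁻¹ ∨ ∃ w, W w ∧ p⁻¹ * q = x * w) := by
      intro p hp q hq hpq
      exact hshape p q hpq (hs (Finset.mem_coe.mpr hp) (Finset.mem_coe.mpr hq) hpq)
    have reshape : ∀ p q : G,
        (p⁻¹ * q = d ∨ p⁻¹ * q = d⁻¹ ∨ ∃ w, W w ∧ p⁻¹ * q = x * w) →
        ((p⁻¹ * q = d ∨ p⁻¹ * q = d⁻¹) ∨ ∃ w, W w ∧ p⁻¹ * q = x * w) := by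
      intro p q h
      rcases h with h | h | h
      · exact Or.inl (Or.inl h)
      · exact Or.inl (Or.inr h)
      · exact Or.inr h
    have s12 := reshape _ _ (hget g1 hg1 g2 hg2 h12)
    have s13 := reshape _ _ (hget g1 hg1 g3 hg3 h13)
    have s14 := reshape _ _ (hget g1 hg1 g4 hg4 h14)
    have hRpair : ∀ p q p' q' : G, p ∈ s → q ∈ s → p' ∈ s → q' ∈ s →
        p ≠ q → p' ≠ q' → q ≠ q' →
        (p⁻¹ * q = d ∨ p⁻¹ * q = d⁻¹) → (p'⁻¹ * q' = d ∨ p'⁻¹ * q' = d⁻¹) →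
        p = p' → False := by
      intro p q p' q' hp hq hp' hq' hpq hp'q' hqq' hA1 hA2 hpp'
      subst hpp'
      have h' := hget q hq q' hq' hqq'
      rw [show q⁻¹ * q' = (p⁻¹*q)⁻¹ * (p⁻¹*q') by group] at h'
      exact hRR _ _ hA1 hA2 (fun h => hqq' (mul_left_cancel h)) h'
    rcases s12 with hA12 | ⟨w2, hw2, hF12⟩
    · rcases s13 with hA13 | ⟨w3, hw3, hF13⟩
      · exact hRpair g1 g2 g1 g3 hg1 hg2 hg1 hg3 h12 h13 h23 hA12 hA13 rfl
      · rcases s14 with hA14 | ⟨w4, hw4, hF14⟩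
        · exact hRpair g1 g2 g1 g4 hg1 hg2 hg1 hg4 h12 h14 h24 hA12 hA14 rfl
        · -- (R, F, F) : ρ = g1⁻¹g2
          have hρA : g1⁻¹*g2 ∈ A := by
            rcases hA12 with h | h
            · rw [h]; exact hdA
            · rw [h]; exact A.inv_mem hdA
          have hW3 : W (w3 * (g1⁻¹*g2)) := by
            have h' := hget g2 hg2 g3 hg3 h23
            rw [show g2⁻¹ * g3 = (g1⁻¹*g2)⁻¹ * (g1⁻¹*g3) by group, hF13,
              hratio _ _ hρA (hWA w3 hw3)] at h'
            exact hxsh _ _ hA12 hw3 h'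
          have hW4 : W (w4 * (g1⁻¹*g2)) := by
            have h' := hget g2 hg2 g4 hg4 h24
            rw [show g2⁻¹ * g4 = (g1⁻¹*g2)⁻¹ * (g1⁻¹*g4) by group, hF14,
              hratio _ _ hρA (hWA w4 hw4)] at h'
            exact hxsh _ _ hA12 hw4 h'
          have hp34 : (w3 = e₁ ∧ w4 = e₂) ∨ (w3 = e₂ ∧ w4 = e₁) := by
            have h' := hget g3 hg3 g4 hg4 h34
            rw [show g3⁻¹ * g4 = (g1⁻¹*g3)⁻¹ * (g1⁻¹*g4) by group, hF13, hF14,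
              show (x*w3)⁻¹*(x*w4) = w3⁻¹*w4 by group] at h'
            exact hFFpair w3 w4 hw3 hw4 h'
          exact hRFF _ _ _ hA12 hw3 hw4 hp34 hW3 hW4
    · rcases s13 with hA13 | ⟨w3, hw3, hF13⟩
      · rcases s14 with hA14 | ⟨w4, hw4, hF14⟩
        · exact hRpair g1 g3 g1 g4 hg1 hg3 hg1 hg4 h13 h14 h34 hA13 hA14 rfl
        · -- (F, R, F) : ρ = g1⁻¹g3
          have hρA : g1⁻¹*g3 ∈ A := by
            rcases hA13 with h | h
            · rw [h]; exact hdA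
            · rw [h]; exact A.inv_mem hdA
          have hW2 : W (w2 * (g1⁻¹*g3)) := by
            have h' := hget g3 hg3 g2 hg2 (Ne.symm h23)
            rw [show g3⁻¹ * g2 = (g1⁻¹*g3)⁻¹ * (g1⁻¹*g2) by group, hF12,
              hratio _ _ hρA (hWA w2 hw2)] at h'
            exact hxsh _ _ hA13 hw2 h'
          have hW4 : W (w4 * (g1⁻¹*g3)) := by
            have h' := hget g3 hg3 g4 hg4 h34
            rw [show g3⁻¹ * g4 = (g1⁻¹*g3)⁻¹ * (g1⁻¹*g4) by group, hF14,
              hratio _ _ hρA (hWA w4 hw4)] at h'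
            exact hxsh _ _ hA13 hw4 h'
          have hp24 : (w2 = e₁ ∧ w4 = e₂) ∨ (w2 = e₂ ∧ w4 = e₁) := by
            have h' := hget g2 hg2 g4 hg4 h24
            rw [show g2⁻¹ * g4 = (g1⁻¹*g2)⁻¹ * (g1⁻¹*g4) by group, hF12, hF14,
              show (x*w2)⁻¹*(x*w4) = w2⁻¹*w4 by group] at h'
            exact hFFpair w2 w4 hw2 hw4 h'
          exact hRFF _ _ _ hA13 hw2 hw4 hp24 hW2 hW4
      · rcases s14 with hA14 | ⟨w4, hw4, hF14⟩
        · -- (F, F, R) : ρ = g1⁻¹g4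
          have hρA : g1⁻¹*g4 ∈ A := by
            rcases hA14 with h | h
            · rw [h]; exact hdA
            · rw [h]; exact A.inv_mem hdA
          have hW2 : W (w2 * (g1⁻¹*g4)) := by
            have h' := hget g4 hg4 g2 hg2 (Ne.symm h24)
            rw [show g4⁻¹ * g2 = (g1⁻¹*g4)⁻¹ * (g1⁻¹*g2) by group, hF12,
              hratio _ _ hρA (hWA w2 hw2)] at h'
            exact hxsh _ _ hA14 hw2 h'
          have hW3 : W (w3 * (g1⁻¹*g4)) := by
            have h' := hget g4 hg4 g3 hg3 (Ne.symm h34)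
            rw [show g4⁻¹ * g3 = (g1⁻¹*g4)⁻¹ * (g1⁻¹*g3) by group, hF13,
              hratio _ _ hρA (hWA w3 hw3)] at h'
            exact hxsh _ _ hA14 hw3 h'
          have hp23 : (w2 = e₁ ∧ w3 = e₂) ∨ (w2 = e₂ ∧ w3 = e₁) := by
            have h' := hget g2 hg2 g3 hg3 h23
            rw [show g2⁻¹ * g3 = (g1⁻¹*g2)⁻¹ * (g1⁻¹*g3) by group, hF12, hF13,
              show (x*w2)⁻¹*(x*w3) = w2⁻¹*w3 by group] at h'
            exact hFFpair w2 w3 hw2 hw3 h'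
          exact hRFF _ _ _ hA14 hw2 hw3 hp23 hW2 hW3
        · -- (F, F, F)
          have hp23 : (w2 = e₁ ∧ w3 = e₂) ∨ (w2 = e₂ ∧ w3 = e₁) := by
            have h' := hget g2 hg2 g3 hg3 h23
            rw [show g2⁻¹ * g3 = (g1⁻¹*g2)⁻¹ * (g1⁻¹*g3) by group, hF12, hF13,
              show (x*w2)⁻¹*(x*w3) = w2⁻¹*w3 by group] at h'
            exact hFFpair w2 w3 hw2 hw3 h'
          have hp24 : (w2 = e₁ ∧ w4 = e₂) ∨ (w2 = e₂ ∧ w4 = e₁) := by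
            have h' := hget g2 hg2 g4 hg4 h24
            rw [show g2⁻¹ * g4 = (g1⁻¹*g2)⁻¹ * (g1⁻¹*g4) by group, hF12, hF14,
              show (x*w2)⁻¹*(x*w4) = w2⁻¹*w4 by group] at h'
            exact hFFpair w2 w4 hw2 hw4 h'
          have hw34 : w3 = w4 := by
            rcases hp23 with ⟨h2, h3⟩ | ⟨h2, h3⟩ <;> rcases hp24 with ⟨h2', h4⟩ | ⟨h2', h4⟩
            · exact h3.trans h4.symm
            · exact absurd (h2.symm.trans h2') he₁e₂
            · exact absurd (h2'.symm.trans h2) he₁e₂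
            · exact h3.trans h4.symm
          apply h34
          have hEq : g1⁻¹*g3 = g1⁻¹*g4 := by rw [hF13, hF14, hw34]
          exact mul_left_cancel hEq
end

section
/- Let G ≤ Sym(n) be a transitive permutation group and let H ≤ G also be transitive. If H has the EKR property (i.e., α(Γ_H) = |H|/n), then G has the EKR property (i.e., α(Γ_G) = |G|/n). -/
lemma indepNum_bddAbove {V : Type*} [Fintype V] (X : SimpleGraph V) :
    BddAbove {k | ∃ s : Finset V, IsIndepSet X ↑s ∧ s.card = k} :=
  ⟨Fintype.card V, fun _ ⟨s, _, hs⟩ => hs ▸ Finset.card_le_univ s⟩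

lemma card_le_indepNum {V : Type*} [Fintype V] {X : SimpleGraph V} {s : Finset V}
    (h : IsIndepSet X ↑s) : s.card ≤ indepNum X :=
  le_csSup (indepNum_bddAbove X) ⟨s, h, rfl⟩

lemma exists_indep_card_eq {V : Type*} [Fintype V] (X : SimpleGraph V) :
    ∃ s : Finset V, IsIndepSet X ↑s ∧ s.card = indepNum X := by
  have h := Nat.sSup_mem (s := {k | ∃ s : Finset V, IsIndepSet X ↑s ∧ s.card = k})
    ⟨0, ⟨∅, by simp [IsIndepSet], Finset.card_empty⟩⟩ (indepNum_bddAbove X)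
  exact h

-- orbit-stabilizer for transitive subgroups of Perm (Fin n)
lemma card_eq_stab {n : ℕ} (hn : 0 < n) (G : Subgroup (Equiv.Perm (Fin n)))
    (hGtrans : ∀ i j : Fin n, ∃ σ ∈ G, σ i = j) :
    Nat.card G = n * Nat.card (MulAction.stabilizer G (⟨0, hn⟩ : Fin n)) := by
  classical
  set i0 : Fin n := ⟨0, hn⟩
  have horb : MulAction.orbit G i0 = Set.univ := by
    ext j
    simp only [Set.mem_univ, iff_true, MulAction.mem_orbit_iff]
    obtain ⟨σ, hσ, hσ0⟩ := hGtrans i0 j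
    exact ⟨⟨σ, hσ⟩, hσ0⟩
  have hcard : Nat.card (MulAction.orbit G i0) = n := by
    rw [horb]
    simpa using Nat.card_congr (Equiv.Set.univ (Fin n))
  have := MulAction.card_orbit_mul_card_stabilizer_eq_card_group G i0
  rw [← Nat.card_eq_fintype_card, ← Nat.card_eq_fintype_card, ← Nat.card_eq_fintype_card,
    hcard] at this
  omega

/-- Let `H ≤ G ≤ Sym(n)` both be transitive. If `H` has the EKR property
(`α(Γ_H) = |H|/n`), then so does `G` (`α(Γ_G) = |G|/n`). -/
theorem stmt_18 {n : ℕ} (G H : Subgroup (Equiv.Perm (Fin n))) (hHG : H ≤ G)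
    (hGtrans : ∀ i j : Fin n, ∃ σ ∈ G, σ i = j)
    (hHtrans : ∀ i j : Fin n, ∃ σ ∈ H, σ i = j)
    (hEKR : indepNum (cayley H (der H)) = Nat.card H / n) :
    indepNum (cayley G (der G)) = Nat.card G / n := by
  classical
  haveI : Fintype ↥G := Fintype.ofFinite _
  haveI : Fintype ↥H := Fintype.ofFinite _
  rcases Nat.eq_zero_or_pos n with hn | hn
  · exfalso
    subst hn
    have h1 : ({1} : Finset ↥H).card ≤ indepNum (cayley H (der H)) :=
      card_le_indepNum (by simp [IsIndepSet])
    simp [hEKR] at h1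
  set i0 : Fin n := ⟨0, hn⟩ with hi0
  have hG := card_eq_stab hn G hGtrans
  have hH := card_eq_stab hn H hHtrans
  set cG := Nat.card (MulAction.stabilizer G i0) with hcG
  set cH := Nat.card (MulAction.stabilizer H i0) with hcH
  have hdivG : Nat.card G / n = cG := by rw [hG, Nat.mul_div_cancel_left _ hn]
  have hm : indepNum (cayley H (der H)) = cH := by
    rw [hEKR, hH, Nat.mul_div_cancel_left _ hn]
  -- lower bound
  set S : Finset ↥G := Finset.univ.filter (fun σ => (σ : Equiv.Perm (Fin n)) i0 = i0) with hS
  have hScard : S.card = cG := by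
    rw [hcG, Nat.card_eq_fintype_card, hS, ← Fintype.card_subtype]
    exact (Fintype.card_congr (Equiv.subtypeEquivRight (fun σ => by
      simp [MulAction.mem_stabilizer_iff, Subgroup.smul_def, Equiv.Perm.smul_def]))).symm
  have hSindep : IsIndepSet (cayley G (der G)) ↑S := by
    intro a ha b hb hab hadj
    rw [hS, Finset.coe_filter, Set.mem_setOf_eq] at ha hb
    obtain ⟨-, hd, -⟩ := hadj
    apply hd i0
    have h2 : ((a : Equiv.Perm (Fin n)))⁻¹ i0 = i0 := by
      nth_rewrite 1 [← ha.2]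
      exact Equiv.symm_apply_apply _ _
    simp [Subgroup.coe_mul, Equiv.Perm.mul_apply, hb.2, h2]
  have lower : cG ≤ indepNum (cayley G (der G)) := hScard ▸ card_le_indepNum hSindep
  -- upper bound
  obtain ⟨s, hsind, hscard⟩ := exists_indep_card_eq (cayley G (der G))
  set H' := H.subgroupOf G with hH'
  haveI : Fintype (↥G ⧸ H') := Fintype.ofFinite _
  have hfib : ∀ q : ↥G ⧸ H',
      (s.filter fun x => (QuotientGroup.mk x : ↥G ⧸ H') = q).card ≤ cH := by
    intro q
    set t := s.filter (fun x => (QuotientGroup.mk x : ↥G ⧸ H') = q) with ht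
    set g := Quotient.out q with hgdef
    have hg : (QuotientGroup.mk g : ↥G ⧸ H') = q := QuotientGroup.out_eq' q
    have hmem : ∀ x ∈ t, ((g⁻¹ * x : ↥G) : Equiv.Perm (Fin n)) ∈ H := by
      intro x hx
      have h1 : (QuotientGroup.mk g : ↥G ⧸ H') = QuotientGroup.mk x := by
        rw [hg]; exact ((Finset.mem_filter.mp hx).2).symm
      exact Subgroup.mem_subgroupOf.mp (QuotientGroup.eq.mp h1)
    set φ : {x // x ∈ t} → ↥H :=
      fun x => ⟨((g⁻¹ * x.1 : ↥G) : Equiv.Perm (Fin n)), hmem x.1 x.2⟩ with hφ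
    have key : ∀ (p r : {x // x ∈ t}),
        (((φ p)⁻¹ * (φ r) : ↥H) : Equiv.Perm (Fin n))
          = ((p.1⁻¹ * r.1 : ↥G) : Equiv.Perm (Fin n)) := by
      intro p r
      show (((g⁻¹ * p.1 : ↥G) : Equiv.Perm (Fin n)))⁻¹
          * ((g⁻¹ * r.1 : ↥G) : Equiv.Perm (Fin n)) = _
      push_cast
      group
    have hinj : Function.Injective φ := by
      intro x y hxy
      have h1 : (φ x).1 = (φ y).1 := congrArg Subtype.val hxy
      have h2 : (g⁻¹ * x.1 : ↥G) = g⁻¹ * y.1 := Subtype.ext h1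
      exact Subtype.ext (mul_left_cancel h2)
    set u := t.attach.image φ with hu
    have hucard : u.card = t.card := by
      rw [hu, Finset.card_image_of_injective _ hinj, Finset.card_attach]
    have huind : IsIndepSet (cayley H (der H)) ↑u := by
      intro a ha b hb hab hadj
      rw [hu, Finset.coe_image] at ha hb
      obtain ⟨x, -, rfl⟩ := ha
      obtain ⟨y, -, rfl⟩ := hb
      have hxyne : x.1 ≠ y.1 := fun h => hab (congrArg φ (Subtype.ext h))
      have hx : x.1 ∈ (s : Set ↥G) := Finset.mem_coe.mpr (Finset.mem_of_mem_filter _ x.2)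
      have hy : y.1 ∈ (s : Set ↥G) := Finset.mem_coe.mpr (Finset.mem_of_mem_filter _ y.2)
      obtain ⟨-, hd1, hd2⟩ := hadj
      refine hsind hx hy hxyne ⟨hxyne, fun i => ?_, fun i => ?_⟩
      · rw [← key x y]; exact hd1 i
      · rw [← key y x]; exact hd2 i
    calc t.card = u.card := hucard.symm
      _ ≤ indepNum (cayley H (der H)) := card_le_indepNum huind
      _ = cH := hm
  have hsum : s.card ≤ Fintype.card (↥G ⧸ H') * cH := by
    rw [Finset.card_eq_sum_card_fiberwise
      (f := fun x => (QuotientGroup.mk x : ↥G ⧸ H')) (fun x _ => Finset.mem_univ _)]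
    calc ∑ q ∈ Finset.univ, (s.filter fun x => (QuotientGroup.mk x : ↥G ⧸ H') = q).card
        ≤ ∑ _q ∈ (Finset.univ : Finset (↥G ⧸ H')), cH := Finset.sum_le_sum (fun q _ => hfib q)
      _ = Fintype.card (↥G ⧸ H') * cH := by rw [Finset.sum_const, Finset.card_univ, smul_eq_mul]
  -- counting
  have hcardH' : Nat.card H' = Nat.card H :=
    Nat.card_congr (Subgroup.subgroupOfEquivOfLe hHG).toEquiv
  have hquot : Nat.card G = Nat.card (↥G ⧸ H') * Nat.card H := by
    rw [← hcardH']; exact Subgroup.card_eq_card_quotient_mul_card_subgroup H'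
  have hQ : cG = Fintype.card (↥G ⧸ H') * cH := by
    have : n * cG = n * (Fintype.card (↥G ⧸ H') * cH) := by
      rw [← hG, hquot, hH, Nat.card_eq_fintype_card]
      ring
    exact Nat.eq_of_mul_eq_mul_left hn this
  have upper : indepNum (cayley G (der G)) ≤ cG := by
    rw [← hscard, hQ]; exact hsum
  rw [hdivG]
  exact le_antisymm upper lower
end

section
/- Let p ≥ 3 be a prime and let D ⊆ Der(Sym(p)) be inverse-closed. If the independence number of Cay(Sym(p), Der(Sym(p)) \ D) is strictly greater than (p−1)!, then D contains at least (p−2)! labels, i.e., |{{d, d⁻¹} : d ∈ D}| ≥ (p−2)!. -/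
/-- The set of derangements of `Sym(p)`: the permutations without fixed points. -/
def derSym (p : ℕ) : Set (Equiv.Perm (Fin p)) := {σ | ∀ i, σ i ≠ i}

open Equiv Subgroup

lemma aux_orderOf_of_mem_prime {G : Type*} [Group G] {p : ℕ} (hp : p.Prime)
    {P : Subgroup G} (hP : Nat.card P = p) {x : G} (hx : x ∈ P) (hx1 : x ≠ 1) :
    orderOf x = p := by
  have h2 : orderOf x = orderOf (⟨x, hx⟩ : P) := (Subgroup.orderOf_mk x hx).symm
  have h1 : orderOf (⟨x, hx⟩ : P) ∣ p := hP ▸ orderOf_dvd_natCard _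
  rw [h2]
  rcases hp.eq_one_or_self_of_dvd _ h1 with h | h
  · exact absurd (congrArg (Subtype.val) (orderOf_eq_one_iff.mp h)) hx1
  · exact h

lemma aux_derangement_of_orderOf {p : ℕ} (hp : p.Prime) {σ : Equiv.Perm (Fin p)}
    (hσ : orderOf σ = p) : ∀ i, σ i ≠ i := by
  have hne : σ ≠ 1 := by
    rintro rfl
    rw [orderOf_one] at hσ
    exact hp.one_lt.ne hσ
  obtain ⟨l, hl⟩ := Multiset.exists_mem_of_ne_zero (mt Equiv.Perm.cycleType_eq_zero.mp hne)
  have hlp : l = p := by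
    have hdvd : l ∣ p := by
      rw [← hσ, ← Equiv.Perm.lcm_cycleType]; exact Multiset.dvd_lcm hl
    have h2 := Equiv.Perm.two_le_of_mem_cycleType hl
    rcases hp.eq_one_or_self_of_dvd l hdvd with h | h
    · omega
    · exact h
  have hsup : p ≤ σ.support.card := by
    rw [← Equiv.Perm.sum_cycleType]
    have := Multiset.single_le_sum (fun (x : ℕ) _ => Nat.zero_le x) l hl
    omega
  have huniv : σ.support = Finset.univ := by
    apply Finset.eq_univ_of_card
    have := Finset.card_le_univ σ.support
    simp only [Fintype.card_fin] at *
    omega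
  intro i
  exact Equiv.Perm.mem_support.mp (huniv ▸ Finset.mem_univ i)

lemma aux_zpowers_eq_of_mem {G : Type*} [Group G] [Finite G] {p : ℕ} (hp : p.Prime)
    {σ x : G} (hσ : orderOf σ = p) (hx : x ∈ Subgroup.zpowers σ) (hx1 : x ≠ 1) :
    Subgroup.zpowers x = Subgroup.zpowers σ := by
  have hcard : Nat.card (Subgroup.zpowers σ) = p := by rw [Nat.card_zpowers, hσ]
  have hox : orderOf x = p := aux_orderOf_of_mem_prime hp hcard hx hx1
  have hle : (Subgroup.zpowers x : Set G) ⊆ (Subgroup.zpowers σ : Set G) :=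
    Subgroup.zpowers_le.mpr hx
  apply SetLike.coe_injective
  refine Set.eq_of_subset_of_ncard_le hle ?_ (Set.toFinite _)
  have h1 : (Subgroup.zpowers x : Set G).ncard = p := by
    rw [← Nat.card_coe_set_eq, SetLike.coe_sort_coe, Nat.card_zpowers, hox]
  have h2 : (Subgroup.zpowers σ : Set G).ncard = p := by
    rw [← Nat.card_coe_set_eq, SetLike.coe_sort_coe, Nat.card_zpowers, hσ]
  omega

/-- Let `p ≥ 3` be prime and `D ⊆ Der(Sym(p))` inverse-closed. If the
independence number of `Cay(Sym(p), Der(Sym(p)) \ D)` exceeds `(p−1)!`, then `D` contains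
at least `(p−2)!` labels, i.e. at least `(p−2)!` distinct sets of the form `{d, d⁻¹}`. -/
theorem stmt_19 (p : ℕ) (hp : p.Prime) (hp3 : 3 ≤ p)
    (D : Set (Equiv.Perm (Fin p))) (hD : D ⊆ derSym p)
    (hDinv : ∀ d ∈ D, d⁻¹ ∈ D)
    (h : (p - 1).factorial <
      indepNum (cayley (Equiv.Perm (Fin p)) (derSym p \ D))) :
    (p - 2).factorial ≤
      {s : Set (Equiv.Perm (Fin p)) | ∃ d ∈ D, s = {d, d⁻¹}}.ncard := by
  classical
  obtain ⟨k, rfl⟩ : ∃ k, p = k + 2 := ⟨p - 2, by omega⟩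
  show k.factorial ≤ _
  -- Step 1: extract a large independent set
  have hTne : ({n | ∃ s : Finset (Equiv.Perm (Fin (k + 2))),
      IsIndepSet (cayley _ (derSym (k + 2) \ D)) ↑s ∧ s.card = n}).Nonempty :=
    ⟨0, ∅, by simp [IsIndepSet], rfl⟩
  have hTbdd : BddAbove {n | ∃ s : Finset (Equiv.Perm (Fin (k + 2))),
      IsIndepSet (cayley _ (derSym (k + 2) \ D)) ↑s ∧ s.card = n} :=
    ⟨Fintype.card (Equiv.Perm (Fin (k + 2))), by
      rintro n ⟨s, _, rfl⟩; exact Finset.card_le_univ s⟩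
  obtain ⟨s, hs_ind, hs_card⟩ := Nat.sSup_mem hTne hTbdd
  have hs : (k + 1).factorial < s.card := by
    rw [hs_card]; exact h
  -- Step 2: every subgroup of order p meets D nontrivially
  have key : ∀ σ : Equiv.Perm (Fin (k + 2)), orderOf σ = k + 2 →
      ∃ d, d ∈ D ∧ d ∈ Subgroup.zpowers σ ∧ d ≠ 1 := by
    intro σ hσ
    set P := Subgroup.zpowers σ with hPdef
    have hPcard : Nat.card P = k + 2 := by rw [hPdef, Nat.card_zpowers, hσ]
    have hQcard : Nat.card (Equiv.Perm (Fin (k + 2)) ⧸ P) = (k + 1).factorial := by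
      have h1 := Subgroup.card_eq_card_quotient_mul_card_subgroup P
      have h2 : Nat.card (Equiv.Perm (Fin (k + 2))) = (k + 2).factorial := by
        rw [Nat.card_eq_fintype_card, Fintype.card_perm, Fintype.card_fin]
      rw [h2, hPcard] at h1
      have h3 : (k + 2).factorial = (k + 1).factorial * (k + 2) := by
        rw [Nat.factorial_succ]; ring
      rw [h3] at h1
      exact (Nat.eq_of_mul_eq_mul_right (by omega) h1.symm)
    haveI : Fintype (Equiv.Perm (Fin (k + 2)) ⧸ P) := Fintype.ofFinite _
    have hlt : Fintype.card (Equiv.Perm (Fin (k + 2)) ⧸ P) < Fintype.card s := by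
      rw [Fintype.card_coe, ← Nat.card_eq_fintype_card, hQcard]; exact hs
    obtain ⟨a, b, hab, hfab⟩ := Fintype.exists_ne_map_eq_of_card_lt
      (fun x : s => ((x : Equiv.Perm (Fin (k + 2))) : Equiv.Perm (Fin (k + 2)) ⧸ P)) hlt
    have hgh : (a : Equiv.Perm (Fin (k + 2))) ≠ (b : Equiv.Perm (Fin (k + 2))) :=
      fun e => hab (Subtype.ext e)
    have hdP : (a : Equiv.Perm (Fin (k + 2)))⁻¹ * b ∈ P := QuotientGroup.eq.mp hfab
    set d := (a : Equiv.Perm (Fin (k + 2)))⁻¹ * (b : Equiv.Perm (Fin (k + 2))) with hd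
    have hd1 : d ≠ 1 := fun e => hgh (by rwa [hd, inv_mul_eq_one] at e)
    have hord : orderOf d = k + 2 := aux_orderOf_of_mem_prime hp hPcard hdP hd1
    have hder : d ∈ derSym (k + 2) := aux_derangement_of_orderOf hp hord
    have hderinv : d⁻¹ ∈ derSym (k + 2) := by
      intro i hi
      have h1 := congrArg d hi
      rw [← Equiv.Perm.mul_apply, mul_inv_cancel, Equiv.Perm.one_apply] at h1
      exact hder i h1.symm
    have hdD : d ∈ D := by
      by_contra hdD
      have hdDinv : d⁻¹ ∉ D := fun hmem => hdD (by simpa using hDinv _ hmem)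
      have hinvrw : (b : Equiv.Perm (Fin (k + 2)))⁻¹ * a = d⁻¹ := by
        rw [hd]; group
      have hadj : (cayley (Equiv.Perm (Fin (k + 2))) (derSym (k + 2) \ D)).Adj a b :=
        show (a : Equiv.Perm (Fin (k + 2))) ≠ b ∧ (a : Equiv.Perm (Fin (k + 2)))⁻¹ * b ∈ derSym (k + 2) \ D ∧
          (b : Equiv.Perm (Fin (k + 2)))⁻¹ * a ∈ derSym (k + 2) \ D from
        ⟨hgh, ⟨hder, hdD⟩, by rw [hinvrw]; exact ⟨hderinv, hdDinv⟩⟩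
      exact hs_ind (Finset.mem_coe.mpr a.2) (Finset.mem_coe.mpr b.2) hgh hadj
    exact ⟨d, hdD, hdP, hd1⟩
  -- Step 3: there are at least (k+1)! permutations of order k+2
  set σ₀ : Equiv.Perm (Fin (k + 2)) := finRotate (k + 2) with hσ₀def
  have hc : σ₀.IsCycle := isCycle_finRotate
  have hsupp : σ₀.support = Finset.univ := support_finRotate
  have hord₀ : orderOf σ₀ = k + 2 := by
    rw [hc.orderOf, hsupp, Finset.card_univ, Fintype.card_fin]
  have hfix : ∀ z : Fin (k + 2), σ₀ z ≠ z := fun z =>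
    Equiv.Perm.mem_support.mp (hsupp ▸ Finset.mem_univ z)
  set S := MulAction.stabilizer (ConjAct (Equiv.Perm (Fin (k + 2)))) σ₀ with hSdef
  have hcomm : ∀ υ : ConjAct (Equiv.Perm (Fin (k + 2))), υ ∈ S →
      Commute (ConjAct.ofConjAct υ) σ₀ := by
    intro υ hυ
    rw [hSdef, MulAction.mem_stabilizer_iff, ConjAct.smul_def] at hυ
    exact mul_inv_eq_iff_eq_mul.mp hυ
  have hinj : Function.Injective
      (fun τ : S => (ConjAct.ofConjAct (τ : ConjAct (Equiv.Perm (Fin (k + 2))))) 0) := by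
    rintro ⟨τ, hτ⟩ ⟨τ', hτ'⟩ he
    simp only at he
    apply Subtype.ext
    apply ConjAct.ofConjAct.injective
    ext x
    obtain ⟨m, rfl⟩ := hc.sameCycle (hfix 0) (hfix x)
    have e1 : ∀ (υ : ConjAct (Equiv.Perm (Fin (k + 2)))) (hυ : υ ∈ S),
        (ConjAct.ofConjAct υ) ((σ₀ ^ m) 0) = (σ₀ ^ m) ((ConjAct.ofConjAct υ) 0) := by
      intro υ hυ
      rw [← Equiv.Perm.mul_apply, ← Equiv.Perm.mul_apply, ((hcomm υ hυ).zpow_right m).eq]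
    rw [e1 τ hτ, e1 τ' hτ', he]
  have hScard : Nat.card S ≤ k + 2 := by
    have h1 := Nat.card_le_card_of_injective _ hinj
    simpa [Nat.card_eq_fintype_card] using h1
  haveI : Fintype (MulAction.orbit (ConjAct (Equiv.Perm (Fin (k + 2)))) σ₀) :=
    Fintype.ofFinite _
  haveI : Fintype S := Fintype.ofFinite _
  have horb := MulAction.card_orbit_mul_card_stabilizer_eq_card_group
    (ConjAct (Equiv.Perm (Fin (k + 2)))) σ₀
  have hcg : Fintype.card (ConjAct (Equiv.Perm (Fin (k + 2)))) = (k + 2).factorial := by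
    rw [ConjAct.card, Fintype.card_perm, Fintype.card_fin]
  have horb_ge : (k + 1).factorial ≤
      Fintype.card (MulAction.orbit (ConjAct (Equiv.Perm (Fin (k + 2)))) σ₀) := by
    have h1 : Fintype.card S ≤ k + 2 := by rw [← Nat.card_eq_fintype_card]; exact hScard
    have hfact : (k + 2).factorial = (k + 1).factorial * (k + 2) := by
      rw [Nat.factorial_succ]; ring
    have horb' : Fintype.card (MulAction.orbit (ConjAct (Equiv.Perm (Fin (k + 2)))) σ₀) *
        Fintype.card S = (k + 2).factorial := by
      rw [← hcg]; exact horb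
    have h2 : (k + 1).factorial * (k + 2) ≤
        Fintype.card (MulAction.orbit (ConjAct (Equiv.Perm (Fin (k + 2)))) σ₀) * (k + 2) := by
      calc (k + 1).factorial * (k + 2) = (k + 2).factorial := hfact.symm
        _ = _ * Fintype.card S := horb'.symm
        _ ≤ _ * (k + 2) := Nat.mul_le_mul_left _ h1
    exact Nat.le_of_mul_le_mul_right h2 (by omega)
  set E : Finset (Equiv.Perm (Fin (k + 2))) :=
    Finset.univ.filter (fun σ => orderOf σ = k + 2) with hEdef
  have hEmem : ∀ σ ∈ E, orderOf σ = k + 2 := by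
    intro σ hσ; rw [hEdef] at hσ; exact (Finset.mem_filter.mp hσ).2
  have horbE : MulAction.orbit (ConjAct (Equiv.Perm (Fin (k + 2)))) σ₀ ⊆ ↑E := by
    intro x hx
    have hconj : IsConj x σ₀ := ConjAct.mem_orbit_conjAct.mp hx
    have hct : x.cycleType = σ₀.cycleType := Equiv.Perm.isConj_iff_cycleType_eq.mp hconj
    have hox : orderOf x = k + 2 := by
      rw [← Equiv.Perm.lcm_cycleType, hct, Equiv.Perm.lcm_cycleType, hord₀]
    rw [hEdef]
    simp only [Finset.coe_filter, Set.mem_setOf_eq, Finset.mem_univ, true_and]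
    exact hox
  have hEcard : (k + 1).factorial ≤ E.card := by
    calc (k + 1).factorial
        ≤ Fintype.card (MulAction.orbit (ConjAct (Equiv.Perm (Fin (k + 2)))) σ₀) := horb_ge
      _ = (MulAction.orbit (ConjAct (Equiv.Perm (Fin (k + 2)))) σ₀).ncard := by
          rw [← Nat.card_coe_set_eq, Nat.card_eq_fintype_card]
      _ ≤ (↑E : Set (Equiv.Perm (Fin (k + 2)))).ncard :=
          Set.ncard_le_ncard horbE (Finset.finite_toSet E)
      _ = E.card := Set.ncard_coe_finset E
  -- Step 4: map each order-p permutation to a label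
  set f : Equiv.Perm (Fin (k + 2)) → Set (Equiv.Perm (Fin (k + 2))) :=
    fun σ => if hσ : orderOf σ = k + 2 then
      {(key σ hσ).choose, (key σ hσ).choose⁻¹} else ∅ with hfdef
  have hfval : ∀ (σ) (hσ : orderOf σ = k + 2), f σ = {(key σ hσ).choose, (key σ hσ).choose⁻¹} := by
    intro σ hσ; rw [hfdef]; exact dif_pos hσ
  have hfiber : ∀ L ∈ E.image f, (E.filter (fun τ => f τ = L)).card ≤ k + 1 := by
    intro L hL
    obtain ⟨σ₁, hσ₁E, rfl⟩ := Finset.mem_image.mp hL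
    have hσ₁ : orderOf σ₁ = k + 2 := hEmem σ₁ hσ₁E
    obtain ⟨hd₁D, hd₁P, hd₁1⟩ := (key σ₁ hσ₁).choose_spec
    have hsub : ↑(E.filter (fun τ => f τ = f σ₁)) ⊆
        ((Subgroup.zpowers σ₁ : Set (Equiv.Perm (Fin (k + 2)))) \ {1}) := by
      intro τ hτ
      rw [Finset.mem_coe, Finset.mem_filter] at hτ
      obtain ⟨hτE, hτf⟩ := hτ
      have hτo : orderOf τ = k + 2 := hEmem τ hτE
      obtain ⟨hdτD, hdτP, hdτ1⟩ := (key τ hτo).choose_spec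
      rw [hfval τ hτo, hfval σ₁ hσ₁] at hτf
      have hmem : (key τ hτo).choose ∈
          ({(key σ₁ hσ₁).choose, (key σ₁ hσ₁).choose⁻¹} :
            Set (Equiv.Perm (Fin (k + 2)))) := by
        rw [← hτf]; exact Set.mem_insert _ _
      have hzd : Subgroup.zpowers (key τ hτo).choose = Subgroup.zpowers (key σ₁ hσ₁).choose := by
        rcases hmem with h1 | h1
        · rw [h1]
        · rw [Set.mem_singleton_iff.mp h1, Subgroup.zpowers_inv]
      have hzτ : Subgroup.zpowers τ = Subgroup.zpowers σ₁ := by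
        rw [← aux_zpowers_eq_of_mem hp hτo hdτP hdτ1, hzd,
          aux_zpowers_eq_of_mem hp hσ₁ hd₁P hd₁1]
      constructor
      · rw [← hzτ]; exact Subgroup.mem_zpowers τ
      · simp only [Set.mem_singleton_iff]
        intro e
        rw [e, orderOf_one] at hτo
        omega
    have hτ1 : ((Subgroup.zpowers σ₁ : Set (Equiv.Perm (Fin (k + 2)))) \ {1}).ncard = k + 1 := by
      rw [Set.ncard_diff_singleton_of_mem (Subgroup.one_mem _)]
      rw [← Nat.card_coe_set_eq, SetLike.coe_sort_coe, Nat.card_zpowers, hσ₁]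
      omega
    calc (E.filter (fun τ => f τ = f σ₁)).card
        = (↑(E.filter (fun τ => f τ = f σ₁)) :
            Set (Equiv.Perm (Fin (k + 2)))).ncard := (Set.ncard_coe_finset _).symm
      _ ≤ ((Subgroup.zpowers σ₁ : Set (Equiv.Perm (Fin (k + 2)))) \ {1}).ncard :=
          Set.ncard_le_ncard hsub (Set.toFinite _)
      _ = k + 1 := hτ1
  have hEle := Finset.card_le_mul_card_image E (k + 1) hfiber
  have himg : k.factorial ≤ (E.image f).card := by
    have h1 : (k + 1) * k.factorial ≤ (k + 1) * (E.image f).card := by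
      calc (k + 1) * k.factorial = (k + 1).factorial := (Nat.factorial_succ k).symm
        _ ≤ E.card := hEcard
        _ ≤ (k + 1) * (E.image f).card := hEle
    exact Nat.le_of_mul_le_mul_left h1 (by omega)
  -- Step 5: conclude
  have hsubL : ↑(E.image f) ⊆
      {s : Set (Equiv.Perm (Fin (k + 2))) | ∃ d ∈ D, s = {d, d⁻¹}} := by
    intro L hL
    obtain ⟨σ₁, hσ₁E, rfl⟩ := Finset.mem_image.mp (Finset.mem_coe.mp hL)
    have hσ₁ : orderOf σ₁ = k + 2 := hEmem σ₁ hσ₁E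
    obtain ⟨hd₁D, _, _⟩ := (key σ₁ hσ₁).choose_spec
    exact ⟨(key σ₁ hσ₁).choose, hd₁D, hfval σ₁ hσ₁⟩
  have hfin : ({s : Set (Equiv.Perm (Fin (k + 2))) | ∃ d ∈ D, s = {d, d⁻¹}}).Finite := by
    have heq : {s : Set (Equiv.Perm (Fin (k + 2))) | ∃ d ∈ D, s = {d, d⁻¹}} =
        (fun d : Equiv.Perm (Fin (k + 2)) => ({d, d⁻¹} : Set (Equiv.Perm (Fin (k + 2))))) '' D := by
      ext L
      simp only [Set.mem_setOf_eq, Set.mem_image]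
      constructor
      · rintro ⟨d, hd, rfl⟩; exact ⟨d, hd, rfl⟩
      · rintro ⟨d, hd, rfl⟩; exact ⟨d, hd, rfl⟩
    rw [heq]
    exact (Set.toFinite D).image _
  calc k.factorial ≤ (E.image f).card := himg
    _ = (↑(E.image f) : Set (Set (Equiv.Perm (Fin (k + 2))))).ncard :=
        (Set.ncard_coe_finset _).symm
    _ ≤ _ := Set.ncard_le_ncard hsubL hfin
end
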